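/- The function f(x,y) = x·y·√((1-x-y)/(x(1-y))) on the domain {(x,y) : x > 0, 0 < y < 1, x + y < 1} attains its maximum value 1/(3√3) at (x,y) = (1/6, 2/3). -/
import Mathlib


theorem max_of_f :
    (∀ x y : ℝ, 0 < x → 0 < y → y < 1 → x + y < 1 →
      x * y * Real.sqrt ((1 - x - y) / (x * (1 - y))) ≤ 1 / (3 * Real.sqrt 3)) ∧
    (1 / 6 : ℝ) * (2 / 3) * Real.sqrt ((1 - 1 / 6 - 2 / 3) / ((1 / 6) * (1 - 2 / 3)))
      = 1 / (3 * Real.sqrt 3) := by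
  have h3 : (0:ℝ) < Real.sqrt 3 := Real.sqrt_pos.mpr (by norm_num)
  have hrhs : 1 / (3 * Real.sqrt 3) = Real.sqrt (1/27) := by
    rw [show (1/27 : ℝ) = (1/9)^2 * 3 by norm_num, Real.sqrt_mul (by positivity),
      Real.sqrt_sq (by norm_num)]
    have := Real.mul_self_sqrt (by norm_num : (0:ℝ) ≤ 3)
    field_simp
    nlinarith [this, h3]
  constructor
  · intro x y hx hy hy1 hxy
    have hden : 0 < x * (1 - y) := mul_pos hx (by linarith)
    have hnum : 0 ≤ 1 - x - y := by linarith
    have hxy0 : 0 ≤ x * y := by positivity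
    rw [show x * y * Real.sqrt ((1 - x - y) / (x * (1 - y)))
        = Real.sqrt ((x*y)^2 * ((1 - x - y) / (x * (1 - y)))) by
      rw [Real.sqrt_mul (by positivity), Real.sqrt_sq hxy0], hrhs]
    apply Real.sqrt_le_sqrt
    rw [mul_div_assoc' , div_le_iff₀ hden]
    nlinarith [sq_nonneg (1 - y - 2*x), sq_nonneg (3*(1-y) - 1), mul_pos hx hy,
      mul_nonneg (mul_nonneg hx.le (sq_nonneg (3*(1-y)-1))) hnum,
      mul_nonneg (mul_nonneg hy.le hy.le) (mul_nonneg (sq_nonneg (1-y-2*x)) (by linarith : (0:ℝ) ≤ 1 - y))]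
  · rw [hrhs, show ((1:ℝ) - 1 / 6 - 2 / 3) / ((1 / 6) * (1 - 2 / 3)) = 3 by norm_num]
    rw [show (1/27:ℝ) = (1/9)^2 * 3 by norm_num, Real.sqrt_mul (by positivity),
      Real.sqrt_sq (by norm_num)]
    ring
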